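/- arXiv:1804.09752 — 3 statements merged into one kernel-verified Lean document; each statement's English description precedes it below -/
import Mathlib

section
/- (Reversed DY reassignment.) Let x ∈ Q, let t ∈ {0,…,T}, d ∈ D, h ≤ h' in H_D and g ≤ g' in H_B. Let ε ≥ 0 satisfy ε ≤ DY(t,d,h,g), ε ≤ DY(t,d,h',g'), DY(t,d,h',g)+ε ≤ 1 and DY(t,d,h,g')+ε ≤ 1. Define x' from x by decreasing the coordinates DY(t,d,h,g) and DY(t,d,h',g') by ε and increasing the coordinates DY(t,d,h',g) and DY(t,d,h,g') by ε, leaving all other coordinates unchanged. Then x' ∈ Q; moreover, if the reversed inequality D_expdam(t,d,h',g)+D_expdam(t,d,h,g') ≤ D_expdam(t,d,h,g)+D_expdam(t,d,h',g') holds for all t, d, h ≤ h' and g ≤ g', then obj(x') ≤ obj(x). -/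
open Finset

/-- A point of the LP relaxation: `CY t d h1 h2`, `B t g1 g2`, `DY t d h g`,
with times in `Fin (T+1)`, dike heights in `Fin n`, barrier heights in `Fin m`. -/
structure DikePoint (T n m : ℕ) (D : Type) where
  CY : Fin (T + 1) → D → Fin n → Fin n → ℝ
  B : Fin (T + 1) → Fin m → Fin m → ℝ
  DY : Fin (T + 1) → D → Fin n → Fin m → ℝ

/-- Membership in the polytope `Q`: box constraints, support only on
nondecreasing height pairs, initial conditions, flow conservation, and the
linking constraints. -/
def memQ {T n m : ℕ} {D : Type} [Fintype D] [NeZero n] [NeZero m]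
    (x : DikePoint T n m D) : Prop :=
  (∀ t d h1 h2, x.CY t d h1 h2 ∈ Set.Icc (0 : ℝ) 1) ∧
  (∀ t g1 g2, x.B t g1 g2 ∈ Set.Icc (0 : ℝ) 1) ∧
  (∀ t d h g, x.DY t d h g ∈ Set.Icc (0 : ℝ) 1) ∧
  (∀ t d h1 h2, ¬ h1 ≤ h2 → x.CY t d h1 h2 = 0) ∧
  (∀ t g1 g2, ¬ g1 ≤ g2 → x.B t g1 g2 = 0) ∧
  (∀ d, x.CY 0 d 0 0 = 1) ∧
  (∀ d h1 h2, 0 < h2 → x.CY 0 d h1 h2 = 0) ∧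
  (x.B 0 0 0 = 1) ∧
  (∀ g1 g2, 0 < g2 → x.B 0 g1 g2 = 0) ∧
  (∀ (t : Fin T) (d : D) (h : Fin n),
    ∑ h1 ∈ Iic h, x.CY t.castSucc d h1 h = ∑ h3 ∈ Ici h, x.CY t.succ d h h3) ∧
  (∀ t d (h : Fin n), ∑ h1 ∈ Iic h, x.CY t d h1 h = ∑ g : Fin m, x.DY t d h g) ∧
  (∀ (t : Fin T) (g : Fin m),
    ∑ g1 ∈ Iic g, x.B t.castSucc g1 g = ∑ g3 ∈ Ici g, x.B t.succ g g3) ∧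
  (∀ t (d : D) (g : Fin m), ∑ g1 ∈ Iic g, x.B t g1 g = ∑ h : Fin n, x.DY t d h g)

/-- A point is integral if every coordinate is `0` or `1`. -/
def isIntegral {T n m : ℕ} {D : Type} (x : DikePoint T n m D) : Prop :=
  (∀ t d h1 h2, x.CY t d h1 h2 = 0 ∨ x.CY t d h1 h2 = 1) ∧
  (∀ t g1 g2, x.B t g1 g2 = 0 ∨ x.B t g1 g2 = 1) ∧
  (∀ t d h g, x.DY t d h g = 0 ∨ x.DY t d h g = 1)

/-- The linear objective function of the LP relaxation. -/
def obj {T n m : ℕ} {D : Type} [Fintype D]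
    (Dcost : Fin (T + 1) → D → Fin n → Fin n → ℝ)
    (Dexp : Fin (T + 1) → D → Fin n → Fin m → ℝ)
    (Bcost : Fin (T + 1) → Fin m → Fin m → ℝ)
    (Bexp : Fin (T + 1) → Fin m → ℝ)
    (x : DikePoint T n m D) : ℝ :=
  (∑ t, ∑ d, ∑ h2, ∑ h1 ∈ Iic h2, Dcost t d h1 h2 * x.CY t d h1 h2) +
  (∑ t, ∑ d, ∑ h, ∑ g, Dexp t d h g * x.DY t d h g) +
  (∑ t, ∑ g2, ∑ g1 ∈ Iic g2, (Bcost t g1 g2 + Bexp t g2) * x.B t g1 g2)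

/-- Condition (i). -/
def condI {T n m : ℕ} {D : Type}
    (Dexp : Fin (T + 1) → D → Fin n → Fin m → ℝ) : Prop :=
  ∀ (t : Fin (T + 1)) (d : D) (h h' : Fin n) (g g' : Fin m), h ≤ h' → g ≤ g' →
    Dexp t d h g + Dexp t d h' g' ≤ Dexp t d h' g + Dexp t d h g'

/-- Condition (ii). -/
def condII {T m : ℕ}
    (Bcost : Fin (T + 1) → Fin m → Fin m → ℝ) : Prop :=
  ∀ (t : Fin (T + 1)) (g1 g1' g2 g2' : Fin m), g1 ≤ g1' → g1' ≤ g2 → g2 ≤ g2' →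
    Bcost t g1 g2 + Bcost t g1' g2' ≤ Bcost t g1 g2' + Bcost t g1' g2

/-- Condition (iii). -/
def condIII {T n : ℕ} {D : Type}
    (Dcost : Fin (T + 1) → D → Fin n → Fin n → ℝ) : Prop :=
  ∀ (t : Fin (T + 1)) (d : D) (h1 h1' h2 h2' : Fin n), h1 ≤ h1' → h1' ≤ h2 → h2 ≤ h2' →
    Dcost t d h1 h2 + Dcost t d h1' h2' ≤ Dcost t d h1 h2' + Dcost t d h1' h2

/-- reversed DY reassignment: decreasing `DY(t,d,h,g)` and
`DY(t,d,h',g')` by `ε` and increasing `DY(t,d,h',g)` and `DY(t,d,h,g')` by `ε`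
keeps the point in `Q`, and does not increase the objective if the reversed
inequality on the expected damages holds. -/
theorem statement_9 (T n m : ℕ) (hT : 1 ≤ T) [NeZero n] [NeZero m]
    (D : Type) [Fintype D] [Nonempty D] [DecidableEq D]
    (Dcost : Fin (T + 1) → D → Fin n → Fin n → ℝ)
    (Dexp : Fin (T + 1) → D → Fin n → Fin m → ℝ)
    (Bcost : Fin (T + 1) → Fin m → Fin m → ℝ)
    (Bexp : Fin (T + 1) → Fin m → ℝ)
    (hDcost : ∀ t d h1 h2, h1 ≤ h2 → 0 ≤ Dcost t d h1 h2)
    (hDexp : ∀ t d h g, 0 ≤ Dexp t d h g)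
    (hBcost : ∀ t g1 g2, g1 ≤ g2 → 0 ≤ Bcost t g1 g2)
    (hBexp : ∀ t g, 0 ≤ Bexp t g)
    (x : DikePoint T n m D) (hx : memQ x)
    (t : Fin (T + 1)) (d : D) (h h' : Fin n) (g g' : Fin m)
    (hh : h ≤ h') (hg : g ≤ g')
    (ε : ℝ) (hε : 0 ≤ ε)
    (he1 : ε ≤ x.DY t d h g) (he2 : ε ≤ x.DY t d h' g')
    (he3 : x.DY t d h' g + ε ≤ 1) (he4 : x.DY t d h g' + ε ≤ 1) :
    let x' : DikePoint T n m D :=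
      { CY := x.CY
        B := x.B
        DY := fun s e a b => x.DY s e a b
          + (if (s, e, a, b) = (t, d, h', g) then ε else 0)
          + (if (s, e, a, b) = (t, d, h, g') then ε else 0)
          - (if (s, e, a, b) = (t, d, h, g) then ε else 0)
          - (if (s, e, a, b) = (t, d, h', g') then ε else 0) }
    memQ x' ∧
      ((∀ (s : Fin (T + 1)) (e : D) (a a' : Fin n) (b b' : Fin m),
          a ≤ a' → b ≤ b' →
          Dexp s e a' b + Dexp s e a b' ≤ Dexp s e a b + Dexp s e a' b') →
        obj Dcost Dexp Bcost Bexp x' ≤ obj Dcost Dexp Bcost Bexp x) := by 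
  intro x'
  obtain ⟨hCY, hB, hDY, hCYm, hBm, hCY0, hCY0', hB0, hB0', hfC, hlC, hfB, hlB⟩ := hx
  have hxd : ∀ s e a b, x'.DY s e a b = x.DY s e a b
      + (if (s, e, a, b) = (t, d, h', g) then ε else 0)
      + (if (s, e, a, b) = (t, d, h, g') then ε else 0)
      - (if (s, e, a, b) = (t, d, h, g) then ε else 0)
      - (if (s, e, a, b) = (t, d, h', g') then ε else 0) := fun _ _ _ _ => rfl
  have key4 : ∀ (c : Fin n) (w : Fin m) (s : Fin (T+1)) (e : D) (a : Fin n),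
      ∑ b : Fin m, (if (s, e, a, b) = (t, d, c, w) then ε else 0)
        = if (s, e, a) = (t, d, c) then ε else 0 := by
    intro c w s e a; simp [Prod.ext_iff, ite_and, Finset.sum_ite_eq']
  have key3 : ∀ (c : Fin n) (w : Fin m) (s : Fin (T+1)) (e : D) (b : Fin m),
      ∑ a : Fin n, (if (s, e, a, b) = (t, d, c, w) then ε else 0)
        = if (s, e, b) = (t, d, w) then ε else 0 := by
    intro c w s e b; simp [Prod.ext_iff, ite_and, Finset.sum_ite_eq']
  have hsb : ∀ s e a, ∑ b : Fin m, x'.DY s e a b = ∑ b, x.DY s e a b := by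
    intro s e a
    simp only [hxd, Finset.sum_add_distrib, Finset.sum_sub_distrib, key4]
    ring
  have hsa : ∀ s e b, ∑ a : Fin n, x'.DY s e a b = ∑ a, x.DY s e a b := by
    intro s e b
    simp only [hxd, Finset.sum_add_distrib, Finset.sum_sub_distrib, key3]
    ring
  have hDY' : ∀ s e a b, x'.DY s e a b ∈ Set.Icc (0 : ℝ) 1 := by
    intro s e a b
    have h0 := (hDY s e a b).1
    have h1 := (hDY s e a b).2
    rw [hxd, Set.mem_Icc]
    clear hCY hB hCYm hBm hCY0 hCY0' hB0 hB0' hfC hlC hfB hlB hsb hsa hxd key3 key4 hDY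
    clear hDcost hDexp hBcost hBexp hT
    clear_value x'
    clear x'
    rcases em ((s, e, a, b) = (t, d, h', g)) with c1 | c1 <;>
    rcases em ((s, e, a, b) = (t, d, h, g')) with c2 | c2 <;>
    rcases em ((s, e, a, b) = (t, d, h, g)) with c3 | c3 <;>
    rcases em ((s, e, a, b) = (t, d, h', g')) with c4 | c4 <;>
      simp_all [Prod.mk.injEq]
    all_goals first
      | linarith
      | (constructor <;> linarith)
      | (constructor <;> split_ifs <;> simp_all <;> linarith)
      | (split_ifs <;> simp_all <;> linarith)
  have hDYobj : ∀ (c : Fin n) (w : Fin m),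
      ∑ s, ∑ e : D, ∑ a, ∑ b,
        Dexp s e a b * (if (s, e, a, b) = (t, d, c, w) then ε else 0)
        = Dexp t d c w * ε := by
    intro c w
    simp [Prod.ext_iff, ite_and, mul_ite, mul_zero, Finset.sum_ite_eq']
  refine ⟨⟨hCY, hB, hDY', hCYm, hBm, hCY0, hCY0', hB0, hB0', hfC, ?_, hfB, ?_⟩, ?_⟩
  · intro s e a
    exact (hlC s e a).trans (hsb s e a).symm
  · intro s e b
    exact (hlB s e b).trans (hsa s e b).symm
  · intro hcond
    have hX : Dexp t d h' g + Dexp t d h g' ≤ Dexp t d h g + Dexp t d h' g' :=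
      hcond t d h h' g g' hh hg
    have hcorr : ∑ s, ∑ e : D, ∑ a, ∑ b, Dexp s e a b * x'.DY s e a b
        = (∑ s, ∑ e : D, ∑ a, ∑ b, Dexp s e a b * x.DY s e a b)
          + ε * (Dexp t d h' g + Dexp t d h g' - Dexp t d h g - Dexp t d h' g') := by
      simp only [hxd, mul_add, mul_sub, Finset.sum_add_distrib, Finset.sum_sub_distrib,
        hDYobj]
      ring
    have hCYeq : x'.CY = x.CY := rfl
    have hBeq : x'.B = x.B := rfl
    simp only [obj, hCYeq, hBeq, hcorr]
    nlinarith [mul_nonpos_of_nonneg_of_nonpos hε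
      (by linarith : Dexp t d h' g + Dexp t d h g' - Dexp t d h g - Dexp t d h' g' ≤ 0)]
end

section
/- (Integral feasible points yield profiles.) For every integral point x of the polytope Q there exist a barrier height profile hb and a family of dike height profiles (hd)_{d∈D} such that x is exactly the associated 0-1 point (i.e., CY(t,d,h1,h2)=1 iff (h1,h2)=(hd(t−1),hd(t)), B(t,g1,g2)=1 iff (g1,g2)=(hb(t−1),hb(t)), DY(t,d,h,g)=1 iff (h,g)=(hd(t),hb(t)), with hd(−1)=hb(−1)=0, and all other coordinates 0); in particular obj(x) equals the profile cost of ((hd)_{d∈D}, hb). -/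
open Finset

/-- The value of a height profile at the previous time step, with value `z`
at "time −1" (i.e. when `t = 0`). -/
def prevH {k : ℕ} {α : Type} (f : Fin (k + 1) → α) (z : α) (t : Fin (k + 1)) : α :=
  if (t : ℕ) = 0 then z else f ⟨(t : ℕ) - 1, by have := t.isLt; omega⟩

/-- The total cost of a family of dike height profiles `hd` together with a
barrier height profile `hb` (profiles extended by value `0` at time `−1`). -/
noncomputable def profileCost {T n m : ℕ} {D : Type} [Fintype D] [NeZero n] [NeZero m]
    (Dcost : Fin (T + 1) → D → Fin n → Fin n → ℝ)
    (Dexp : Fin (T + 1) → D → Fin n → Fin m → ℝ)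
    (Bcost : Fin (T + 1) → Fin m → Fin m → ℝ)
    (Bexp : Fin (T + 1) → Fin m → ℝ)
    (hd : D → Fin (T + 1) → Fin n) (hb : Fin (T + 1) → Fin m) : ℝ :=
  ∑ t, (Bcost t (prevH hb 0 t) (hb t) + Bexp t (hb t) +
    ∑ d, (Dcost t d (prevH (hd d) 0 t) (hd d t) + Dexp t d (hd d t) (hb t)))

/-- The 0-1 point of the polytope associated with a family of dike height
profiles and a barrier height profile. -/
noncomputable def profilePoint {T n m : ℕ} {D : Type} [NeZero n] [NeZero m]
    (hd : D → Fin (T + 1) → Fin n) (hb : Fin (T + 1) → Fin m) :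
    DikePoint T n m D where
  CY := fun t d h1 h2 => if h1 = prevH (hd d) 0 t ∧ h2 = hd d t then 1 else 0
  B := fun t g1 g2 => if g1 = prevH hb 0 t ∧ g2 = hb t then 1 else 0
  DY := fun t d h g => if h = hd d t ∧ g = hb t then 1 else 0

lemma sum_eq_one_unique {α : Type*} [DecidableEq α] (s : Finset α) (f : α → ℝ)
    (hint : ∀ i ∈ s, f i = 0 ∨ f i = 1) (hsum : ∑ i ∈ s, f i = 1) :
    ∃ a ∈ s, f a = 1 ∧ ∀ b ∈ s, b ≠ a → f b = 0 := by
  by_cases h : ∃ a ∈ s, f a = 1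
  · obtain ⟨a, ha, hfa⟩ := h
    refine ⟨a, ha, hfa, fun b hb hba => ?_⟩
    have h0 : ∀ i ∈ s, 0 ≤ f i := fun i hi => by rcases hint i hi with h|h <;> simp [h]
    have herase : ∑ i ∈ s.erase a, f i = 0 := by
      have hh := Finset.add_sum_erase s f ha
      linarith
    rcases hint b hb with h|h
    · exact h
    · exfalso
      have hle : f b ≤ ∑ i ∈ s.erase a, f i :=
        Finset.single_le_sum (fun i hi => h0 i (Finset.mem_of_mem_erase hi))
          (Finset.mem_erase.2 ⟨hba, hb⟩)
      linarith
  · push_neg at h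
    have : ∀ i ∈ s, f i = 0 := fun i hi => (hint i hi).resolve_right (fun h1 => by
      exact absurd h1 (by simpa using h i hi))
    rw [Finset.sum_eq_zero this] at hsum; norm_num at hsum

lemma sum_nonneg_eq_zero {α : Type*} (s : Finset α) (f : α → ℝ)
    (h0 : ∀ i ∈ s, 0 ≤ f i) (hsum : ∑ i ∈ s, f i = 0) : ∀ i ∈ s, f i = 0 :=
  fun i hi => le_antisymm (by
    have := Finset.single_le_sum h0 hi; linarith) (h0 i hi)

lemma fin_monotone {T : ℕ} {α : Type*} [Preorder α] (f : Fin (T+1) → α)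
    (h : ∀ k (hk : k + 1 < T + 1), f ⟨k, by omega⟩ ≤ f ⟨k+1, hk⟩) : Monotone f := by
  have key : ∀ l k (hk : k < T+1) (hl : l < T+1), k ≤ l → f ⟨k, hk⟩ ≤ f ⟨l, hl⟩ := by
    intro l
    induction l with
    | zero => intro k hk hl hkl; exact le_of_eq (congrArg f (Fin.ext (by simp; omega)))
    | succ l ih =>
      intro k hk hl hkl
      rcases Nat.lt_or_ge k (l+1) with h1 | h1
      · exact le_trans (ih k hk (by omega) (by omega)) (h l hl)
      · exact le_of_eq (congrArg f (Fin.ext (by simp; omega)))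
  intro i j hij
  have := key j.val i.val i.isLt j.isLt hij
  simpa using this

lemma sum_ind {m : ℕ} (p q : Fin m) (hpq : p ≤ q) (g : Fin m) :
    ∑ g1 ∈ Iic g, (if g1 = p ∧ g = q then (1:ℝ) else 0) = if g = q then 1 else 0 := by
  by_cases h : g = q
  · subst h
    rw [if_pos rfl]
    simp only [and_true]
    rw [Finset.sum_ite_eq' (Iic g) p (fun _ => (1:ℝ))]
    simp [hpq]
  · simp [h]

lemma prevH_le {k m : ℕ} [NeZero m] (f : Fin (k+1) → Fin m) (hmono : Monotone f) (t : Fin (k+1)) :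
    prevH f 0 t ≤ f t := by
  unfold prevH
  split
  · exact Fin.zero_le _
  · exact hmono (by rw [Fin.le_def]; simp)

lemma chain_lemma {T m : ℕ} [NeZero m]
    (B : Fin (T+1) → Fin m → Fin m → ℝ)
    (hbox : ∀ t g1 g2, B t g1 g2 ∈ Set.Icc (0:ℝ) 1)
    (hsupp : ∀ t g1 g2, ¬ g1 ≤ g2 → B t g1 g2 = 0)
    (hinit0 : B 0 0 0 = 1)
    (hinit : ∀ g1 g2, 0 < g2 → B 0 g1 g2 = 0)
    (hflow : ∀ (t : Fin T) (g : Fin m),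
      ∑ g1 ∈ Iic g, B t.castSucc g1 g = ∑ g3 ∈ Ici g, B t.succ g g3)
    (hint : ∀ t g1 g2, B t g1 g2 = 0 ∨ B t g1 g2 = 1) :
    ∃ f : Fin (T+1) → Fin m, Monotone f ∧ f 0 = 0 ∧
      ∀ t g1 g2, B t g1 g2 = if g1 = prevH f 0 t ∧ g2 = f t then 1 else 0 := by
  have key : ∀ k (hk : k < T + 1), ∃ a b : Fin m, a ≤ b ∧
      ∀ g1 g2, B ⟨k, hk⟩ g1 g2 = if g1 = a ∧ g2 = b then 1 else 0 := by
    intro k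
    induction k with
    | zero =>
      intro hk
      refine ⟨0, 0, le_refl _, fun g1 g2 => ?_⟩
      have e0 : (⟨0, hk⟩ : Fin (T+1)) = 0 := rfl
      rw [e0]
      by_cases h2 : g2 = 0
      · subst h2
        by_cases h1 : g1 = 0
        · subst h1; simpa using hinit0
        · rw [hsupp _ _ _ (by simpa [Fin.le_zero_iff'] using h1)]
          simp [h1]
      · rw [hinit _ _ ((Fin.pos_iff_ne_zero' _).mpr h2)]
        simp [h2]
    | succ k ih =>
      intro hk
      obtain ⟨a, b, hab, hB⟩ := ih (by omega)
      have hkT : k < T := by omega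
      set t : Fin T := ⟨k, hkT⟩ with ht
      have hL : ∀ g : Fin m, ∑ g1 ∈ Iic g, B t.castSucc g1 g = if g = b then 1 else 0 := by
        intro g
        have hc : ∀ g1 ∈ Iic g, B t.castSucc g1 g = if g1 = a ∧ g = b then (1:ℝ) else 0 :=
          fun g1 _ => hB g1 g
        rw [Finset.sum_congr rfl hc, sum_ind a b hab g]
      have hmass : ∑ g3 ∈ Ici b, B t.succ b g3 = 1 := by
        rw [← hflow t b, hL b]; simp
      obtain ⟨c, hcmem, hc1, hc0⟩ :=
        sum_eq_one_unique (Ici b) _ (fun i _ => hint _ _ _) hmass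
      have hbc : b ≤ c := Finset.mem_Ici.mp hcmem
      refine ⟨b, c, hbc, fun g1 g2 => ?_⟩
      show B t.succ g1 g2 = _
      by_cases h1 : g1 = b
      · subst h1
        by_cases h2 : g2 = c
        · subst h2; simp [hc1]
        · simp only [h2, and_false, if_false]
          by_cases hle : g1 ≤ g2
          · exact hc0 g2 (Finset.mem_Ici.mpr hle) h2
          · exact hsupp _ _ _ hle
      · simp only [h1, false_and, if_false]
        have hzero : ∑ g3 ∈ Ici g1, B t.succ g1 g3 = 0 := by
          rw [← hflow t g1, hL g1]; simp [h1]
        by_cases hle : g1 ≤ g2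
        · exact sum_nonneg_eq_zero (Ici g1) _ (fun i _ => (hbox _ _ _).1) hzero g2
            (Finset.mem_Ici.mpr hle)
        · exact hsupp _ _ _ hle
  have key' : ∀ t : Fin (T+1), ∃ a b : Fin m, a ≤ b ∧
      ∀ g1 g2, B t g1 g2 = if g1 = a ∧ g2 = b then 1 else 0 := fun t => key t.1 t.2
  choose a b hab hchar using key'
  have hb0 : b 0 = 0 := by
    by_contra h
    have h1 : B 0 (a 0) (b 0) = 1 := by rw [hchar 0]; simp
    rw [hinit _ _ ((Fin.pos_iff_ne_zero' _).mpr h)] at h1; norm_num at h1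
  have ha0 : a 0 = 0 := by
    have h := hab 0; rw [hb0] at h
    exact le_antisymm h (Fin.zero_le _)
  have hLgen : ∀ t' : Fin (T+1), ∑ g1 ∈ Iic (b t'), B t' g1 (b t') = 1 := by
    intro t'
    have hc : ∀ g1 ∈ Iic (b t'), B t' g1 (b t') =
        if g1 = a t' ∧ b t' = b t' then (1:ℝ) else 0 := fun g1 _ => hchar t' g1 (b t')
    rw [Finset.sum_congr rfl hc, sum_ind _ _ (hab t') _]; simp
  have hcons : ∀ k (hk : k + 1 < T + 1),
      a ⟨k+1, hk⟩ = b ⟨k, by omega⟩ := by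
    intro k hk
    have hkT : k < T := by omega
    set t : Fin T := ⟨k, hkT⟩ with ht
    have hmass : ∑ g3 ∈ Ici (b t.castSucc), B t.succ (b t.castSucc) g3 = 1 := by
      rw [← hflow t _]; exact hLgen t.castSucc
    by_contra hne
    have hz : ∀ g3 ∈ Ici (b t.castSucc), B t.succ (b t.castSucc) g3 = 0 := by
      intro g3 _
      rw [hchar]
      have hne' : ¬ (b t.castSucc = a t.succ) := fun h => hne h.symm
      simp [hne']
    rw [Finset.sum_eq_zero hz] at hmass; norm_num at hmass
  refine ⟨b, fin_monotone b (fun k hk => ?_), hb0, ?_⟩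
  · calc b ⟨k, by omega⟩ = a ⟨k+1, hk⟩ := (hcons k hk).symm
      _ ≤ b ⟨k+1, hk⟩ := hab _
  · intro t g1 g2
    have hprev : prevH b 0 t = a t := by
      unfold prevH
      split
      case isTrue h =>
        have ht0 : t = 0 := Fin.ext (by simpa using h)
        rw [ht0, ha0]
      case isFalse h =>
        have hk : t.val - 1 + 1 < T + 1 := by have := t.isLt; omega
        have e : (⟨t.val - 1 + 1, hk⟩ : Fin (T+1)) = t := Fin.ext (by simp; omega)
        have := hcons (t.val - 1) hk
        rw [e] at this
        exact this.symm
    rw [hchar t g1 g2, hprev]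

lemma collapseA {n : ℕ} (c : Fin n → Fin n → ℝ) (a b : Fin n) (hab : a ≤ b) :
    ∑ h2, ∑ h1 ∈ Iic h2, c h1 h2 * (if h1 = a ∧ h2 = b then 1 else 0) = c a b := by
  have inner : ∀ h2 : Fin n, ∑ h1 ∈ Iic h2, c h1 h2 * (if h1 = a ∧ h2 = b then 1 else 0)
      = if h2 = b then c a b else 0 := by
    intro h2
    by_cases h : h2 = b
    · subst h
      rw [if_pos rfl]
      have e : ∀ h1 ∈ Iic h2, c h1 h2 * (if h1 = a ∧ h2 = h2 then (1:ℝ) else 0)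
          = if h1 = a then c h1 h2 else 0 := by
        intro h1 _; by_cases h' : h1 = a <;> simp [h']
      rw [Finset.sum_congr rfl e, Finset.sum_ite_eq' (Iic h2) a (fun h1 => c h1 h2)]
      simp [hab]
    · rw [if_neg h]
      exact Finset.sum_eq_zero fun h1 _ => by simp [h]
  rw [Finset.sum_congr rfl (fun h2 _ => inner h2),
    Finset.sum_ite_eq' Finset.univ b (fun _ => c a b)]
  simp

lemma collapseB {n m : ℕ} (e : Fin n → Fin m → ℝ) (a : Fin n) (b : Fin m) :
    ∑ h, ∑ g, e h g * (if h = a ∧ g = b then 1 else 0) = e a b := by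
  have inner : ∀ h : Fin n, ∑ g, e h g * (if h = a ∧ g = b then 1 else 0)
      = if h = a then e a b else 0 := by
    intro h
    by_cases hh : h = a
    · subst hh
      rw [if_pos rfl]
      have e' : ∀ g ∈ (univ : Finset (Fin m)), e h g * (if h = h ∧ g = b then (1:ℝ) else 0)
          = if g = b then e h g else 0 := by
        intro g _; by_cases h' : g = b <;> simp [h']
      rw [Finset.sum_congr rfl e', Finset.sum_ite_eq' univ b (e h)]
      simp
    · rw [if_neg hh]
      exact Finset.sum_eq_zero fun g _ => by simp [hh]
  rw [Finset.sum_congr rfl (fun h _ => inner h), Finset.sum_ite_eq' univ a (fun _ => e a b)]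
  simp


lemma obj_profile {T n m : ℕ} {D : Type} [Fintype D] [NeZero n] [NeZero m]
    (Dcost : Fin (T + 1) → D → Fin n → Fin n → ℝ)
    (Dexp : Fin (T + 1) → D → Fin n → Fin m → ℝ)
    (Bcost : Fin (T + 1) → Fin m → Fin m → ℝ)
    (Bexp : Fin (T + 1) → Fin m → ℝ)
    (hd : D → Fin (T+1) → Fin n) (hb : Fin (T+1) → Fin m)
    (hmd : ∀ d, Monotone (hd d)) (hmb : Monotone hb) :
    obj Dcost Dexp Bcost Bexp (profilePoint hd hb)
      = profileCost Dcost Dexp Bcost Bexp hd hb := by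
  simp only [obj, profilePoint, profileCost]
  have E1 : (∑ t, ∑ d, ∑ h2, ∑ h1 ∈ Iic h2, Dcost t d h1 h2 *
      (if h1 = prevH (hd d) 0 t ∧ h2 = hd d t then 1 else 0))
      = ∑ t, ∑ d, Dcost t d (prevH (hd d) 0 t) (hd d t) :=
    Finset.sum_congr rfl fun t _ => Finset.sum_congr rfl fun d _ =>
      collapseA _ _ _ (prevH_le _ (hmd d) t)
  have E2 : (∑ t, ∑ d, ∑ h, ∑ g, Dexp t d h g *
      (if h = hd d t ∧ g = hb t then 1 else 0))
      = ∑ t, ∑ d, Dexp t d (hd d t) (hb t) :=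
    Finset.sum_congr rfl fun t _ => Finset.sum_congr rfl fun d _ => collapseB _ _ _
  have E3 : (∑ t, ∑ g2, ∑ g1 ∈ Iic g2, (Bcost t g1 g2 + Bexp t g2) *
      (if g1 = prevH hb 0 t ∧ g2 = hb t then 1 else 0))
      = ∑ t, (Bcost t (prevH hb 0 t) (hb t) + Bexp t (hb t)) :=
    Finset.sum_congr rfl fun t _ =>
      collapseA (fun g1 g2 => Bcost t g1 g2 + Bexp t g2) _ _ (prevH_le _ hmb t)
  rw [E1, E2, E3, ← Finset.sum_add_distrib, ← Finset.sum_add_distrib]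
  refine Finset.sum_congr rfl fun t _ => ?_
  rw [← Finset.sum_add_distrib]
  ring

/-- integral feasible points yield profiles: every integral
point of `Q` is the 0-1 point associated with some barrier height profile and
some family of dike height profiles; in particular its objective value equals
the corresponding profile cost. -/
theorem statement_11 (T n m : ℕ) (hT : 1 ≤ T) [NeZero n] [NeZero m]
    (D : Type) [Fintype D] [Nonempty D]
    (Dcost : Fin (T + 1) → D → Fin n → Fin n → ℝ)
    (Dexp : Fin (T + 1) → D → Fin n → Fin m → ℝ)
    (Bcost : Fin (T + 1) → Fin m → Fin m → ℝ)
    (Bexp : Fin (T + 1) → Fin m → ℝ)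
    (hDcost : ∀ t d h1 h2, h1 ≤ h2 → 0 ≤ Dcost t d h1 h2)
    (hDexp : ∀ t d h g, 0 ≤ Dexp t d h g)
    (hBcost : ∀ t g1 g2, g1 ≤ g2 → 0 ≤ Bcost t g1 g2)
    (hBexp : ∀ t g, 0 ≤ Bexp t g)
    (x : DikePoint T n m D) (hx : memQ x) (hxInt : isIntegral x) :
    ∃ (hb : Fin (T + 1) → Fin m) (hd : D → Fin (T + 1) → Fin n),
      Monotone hb ∧ hb 0 = 0 ∧ (∀ d, Monotone (hd d) ∧ hd d 0 = 0) ∧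
      x = profilePoint hd hb ∧
      obj Dcost Dexp Bcost Bexp x = profileCost Dcost Dexp Bcost Bexp hd hb := by
  obtain ⟨hCYbox, hBbox, hDYbox, hCYsupp, hBsupp, hCY0, hCY0', hB0, hB0', hCYflow,
    hCYlink, hBflow, hBlink⟩ := hx
  obtain ⟨hCYint, hBint, hDYint⟩ := hxInt
  obtain ⟨hb, hmb, hb00, hBx⟩ := chain_lemma x.B hBbox hBsupp hB0 hB0' hBflow hBint
  have hCYd : ∀ d, ∃ f : Fin (T+1) → Fin n, Monotone f ∧ f 0 = 0 ∧
      ∀ t h1 h2, x.CY t d h1 h2 = if h1 = prevH f 0 t ∧ h2 = f t then 1 else 0 :=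
    fun d => chain_lemma (fun t h1 h2 => x.CY t d h1 h2)
      (fun t h1 h2 => hCYbox t d h1 h2) (fun t h1 h2 => hCYsupp t d h1 h2)
      (hCY0 d) (fun h1 h2 => hCY0' d h1 h2) (fun t h => hCYflow t d h)
      (fun t h1 h2 => hCYint t d h1 h2)
  choose hd hmd hd00 hCYx using hCYd
  have hLB : ∀ t g, ∑ g1 ∈ Iic g, x.B t g1 g = if g = hb t then (1:ℝ) else 0 := by
    intro t g
    rw [Finset.sum_congr rfl (fun g1 _ => hBx t g1 g), sum_ind _ _ (prevH_le _ hmb t) g]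
  have hLCY : ∀ t d h, ∑ h1 ∈ Iic h, x.CY t d h1 h = if h = hd d t then (1:ℝ) else 0 := by
    intro t d h
    rw [Finset.sum_congr rfl (fun h1 _ => hCYx d t h1 h), sum_ind _ _ (prevH_le _ (hmd d) t) h]
  have hDYzero_col : ∀ t d g, g ≠ hb t → ∀ h, x.DY t d h g = 0 := by
    intro t d g hg h
    have hsum := hBlink t d g
    rw [hLB t g, if_neg hg] at hsum
    exact sum_nonneg_eq_zero univ _ (fun i _ => (hDYbox t d i g).1) hsum.symm h (mem_univ h)
  have hDYzero_row : ∀ t d h, h ≠ hd d t → ∀ g, x.DY t d h g = 0 := by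
    intro t d h hh g
    have hsum := hCYlink t d h
    rw [hLCY t d h, if_neg hh] at hsum
    exact sum_nonneg_eq_zero univ _ (fun i _ => (hDYbox t d h i).1) hsum.symm g (mem_univ g)
  have hDYx : ∀ t d h g, x.DY t d h g = if h = hd d t ∧ g = hb t then 1 else 0 := by
    intro t d h g
    by_cases hh : h = hd d t
    · by_cases hg : g = hb t
      · rw [if_pos ⟨hh, hg⟩]
        have hsum := hBlink t d g
        rw [hLB t g, if_pos hg] at hsum
        rw [Finset.sum_eq_single h
          (fun b _ hb' => hDYzero_row t d b (fun heq => hb' (heq.trans hh.symm)) g)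
          (fun hmem => absurd (mem_univ h) hmem)] at hsum
        exact hsum.symm
      · rw [if_neg (fun hc => hg hc.2)]
        exact hDYzero_col t d g hg h
    · rw [if_neg (fun hc => hh hc.1)]
      exact hDYzero_row t d h hh g
  have hxeq : x = profilePoint hd hb := by
    have hCY' : x.CY = fun t d h1 h2 =>
        if h1 = prevH (hd d) 0 t ∧ h2 = hd d t then (1:ℝ) else 0 := by
      funext t d h1 h2; exact hCYx d t h1 h2
    have hB' : x.B = fun t g1 g2 =>
        if g1 = prevH hb 0 t ∧ g2 = hb t then (1:ℝ) else 0 := by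
      funext t g1 g2; exact hBx t g1 g2
    have hDY' : x.DY = fun t d h g =>
        if h = hd d t ∧ g = hb t then (1:ℝ) else 0 := by
      funext t d h g; exact hDYx t d h g
    calc x = ⟨x.CY, x.B, x.DY⟩ := rfl
      _ = profilePoint hd hb := by rw [hCY', hB', hDY']; rfl
  refine ⟨hb, hd, hmb, hb00, fun d => ⟨hmd d, hd00 d⟩, hxeq, ?_⟩
  rw [hxeq, obj_profile Dcost Dexp Bcost Bexp hd hb hmd hmb]
end

section
/- (Bellman recursion for the dynamic program.) For every t ∈ {1,…,T}, every g ∈ H_B and every η : D → H_D, the value OPT(t,g,η) satisfies OPT(t,g,η) = min over all g' ∈ H_B with g' ≤ g and all η' : D → H_D with η'(d) ≤ η(d) for every d ∈ D of [ OPT(t−1,g',η') + B_cost(t,g',g) + B_expdam(t,g) + Σ_{d∈D} ( D_cost(t,d,η'(d),η(d)) + D_expdam(t,d,η(d),g) ) ], where values are taken in ℝ ∪ {+∞} and the infimum of an empty set is +∞. -/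
open Finset

/-- The partial profile cost up to time `t` of a family of dike height profiles
and a barrier height profile (profiles extended by value `0` at time `−1`). -/
noncomputable def partialCost {T n m : ℕ} {D : Type} [Fintype D] [NeZero n] [NeZero m]
    (Dcost : Fin (T + 1) → D → Fin n → Fin n → ℝ)
    (Dexp : Fin (T + 1) → D → Fin n → Fin m → ℝ)
    (Bcost : Fin (T + 1) → Fin m → Fin m → ℝ)
    (Bexp : Fin (T + 1) → Fin m → ℝ)
    (hd : D → Fin (T + 1) → Fin n) (hb : Fin (T + 1) → Fin m)
    (t : Fin (T + 1)) : ℝ :=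
  ∑ s ∈ Iic t, (Bcost s (prevH hb 0 s) (hb s) + Bexp s (hb s) +
    ∑ d, (Dcost s d (prevH (hd d) 0 s) (hd d s) + Dexp s d (hd d s) (hb s)))

/-- `OPT t g η`: the infimum (in `ℝ ∪ {+∞}`, i.e. `EReal`; the infimum of the
empty set being `+∞`) of the partial profile cost up to time `t` over all
height profiles whose barrier height at time `t` is `g` and whose dike heights
at time `t` are given by `η`. -/
noncomputable def OPT {T n m : ℕ} {D : Type} [Fintype D] [NeZero n] [NeZero m]
    (Dcost : Fin (T + 1) → D → Fin n → Fin n → ℝ)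
    (Dexp : Fin (T + 1) → D → Fin n → Fin m → ℝ)
    (Bcost : Fin (T + 1) → Fin m → Fin m → ℝ)
    (Bexp : Fin (T + 1) → Fin m → ℝ)
    (t : Fin (T + 1)) (g : Fin m) (η : D → Fin n) : EReal :=
  sInf {c : EReal | ∃ (hb : Fin (T + 1) → Fin m) (hd : D → Fin (T + 1) → Fin n),
    Monotone hb ∧ hb 0 = 0 ∧ (∀ d, Monotone (hd d) ∧ hd d 0 = 0) ∧
    hb t = g ∧ (∀ d, hd d t = η d) ∧
    c = ((partialCost Dcost Dexp Bcost Bexp hd hb t : ℝ) : EReal)}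

section Aux

open Finset

/-- Adding a real constant is an order isomorphism of `EReal`. -/
noncomputable def addRealIso (r : ℝ) : EReal ≃o EReal where
  toFun x := x + (r : EReal)
  invFun x := x - (r : EReal)
  left_inv x := EReal.add_sub_cancel_right
  right_inv x := by
    have h := EReal.add_sub_cancel_right (a := x) (b := -r)
    rw [EReal.coe_neg, sub_eq_add_neg, neg_neg, ← sub_eq_add_neg] at h
    exact h
  map_rel_iff' := by
    intro a b
    exact (EReal.addLECancellable_coe r).add_le_add_iff_right

lemma sInf_add_real (S : Set EReal) (r : ℝ) :
    sInf S + (r : EReal) = sInf ((fun x => x + (r : EReal)) '' S) := by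
  rw [sInf_image]
  exact (addRealIso r).map_sInf S

lemma prevH_succ {T : ℕ} {α : Type} (f : Fin (T + 1) → α) (z : α) (t : Fin T) :
    prevH f z t.succ = f t.castSucc := by
  have hne : (t.succ : ℕ) ≠ 0 := by simp
  simp only [prevH, if_neg hne]
  congr 1

lemma prevH_congr {T : ℕ} {α : Type} (f f' : Fin (T + 1) → α) (z : α)
    (u : Fin (T + 1)) (hff' : ∀ s ≤ u, f s = f' s) (s : Fin (T + 1)) (hs : s ≤ u) :
    prevH f z s = prevH f' z s := by
  unfold prevH
  split
  · rfl
  · exact hff' _ (by rw [Fin.le_def] at hs ⊢; simp; omega)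

lemma Iic_succ_fin {T : ℕ} (t : Fin T) :
    (Iic t.succ : Finset (Fin (T + 1))) = insert t.succ (Iic t.castSucc) := by
  ext s
  simp only [mem_Iic, mem_insert, Fin.le_def, Fin.ext_iff, Fin.val_succ, Fin.coe_castSucc]
  omega

lemma succ_not_mem_Iic {T : ℕ} (t : Fin T) :
    t.succ ∉ (Iic t.castSucc : Finset (Fin (T + 1))) := by
  simp [mem_Iic, Fin.le_def]

lemma partialCost_succ {T n m : ℕ} {D : Type} [Fintype D] [NeZero n] [NeZero m]
    (Dcost : Fin (T + 1) → D → Fin n → Fin n → ℝ)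
    (Dexp : Fin (T + 1) → D → Fin n → Fin m → ℝ)
    (Bcost : Fin (T + 1) → Fin m → Fin m → ℝ)
    (Bexp : Fin (T + 1) → Fin m → ℝ)
    (hd : D → Fin (T + 1) → Fin n) (hb : Fin (T + 1) → Fin m) (t : Fin T) :
    partialCost Dcost Dexp Bcost Bexp hd hb t.succ =
      partialCost Dcost Dexp Bcost Bexp hd hb t.castSucc +
      (Bcost t.succ (hb t.castSucc) (hb t.succ) + Bexp t.succ (hb t.succ) +
        ∑ d, (Dcost t.succ d (hd d t.castSucc) (hd d t.succ) +
          Dexp t.succ d (hd d t.succ) (hb t.succ))) := by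
  unfold partialCost
  rw [Iic_succ_fin, Finset.sum_insert (succ_not_mem_Iic t)]
  simp only [prevH_succ]
  ring

lemma partialCost_congr {T n m : ℕ} {D : Type} [Fintype D] [NeZero n] [NeZero m]
    (Dcost : Fin (T + 1) → D → Fin n → Fin n → ℝ)
    (Dexp : Fin (T + 1) → D → Fin n → Fin m → ℝ)
    (Bcost : Fin (T + 1) → Fin m → Fin m → ℝ)
    (Bexp : Fin (T + 1) → Fin m → ℝ)
    (hd hd' : D → Fin (T + 1) → Fin n) (hb hb' : Fin (T + 1) → Fin m)
    (u : Fin (T + 1)) (hB : ∀ s ≤ u, hb s = hb' s) (hD : ∀ d, ∀ s ≤ u, hd d s = hd' d s) :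
    partialCost Dcost Dexp Bcost Bexp hd hb u =
      partialCost Dcost Dexp Bcost Bexp hd' hb' u := by
  unfold partialCost
  refine Finset.sum_congr rfl fun s hs => ?_
  rw [mem_Iic] at hs
  rw [prevH_congr hb hb' 0 u hB s hs, hB s hs]
  refine congrArg _ (Finset.sum_congr rfl fun d _ => ?_)
  rw [prevH_congr (hd d) (hd' d) 0 u (hD d) s hs, hD d s hs]

end Aux

/-- Bellman recursion for the dynamic program: for every
`t ∈ {1,…,T}` (written `t.succ` for `t : Fin T`), every barrier height `g` and
every dike-height vector `η`, `OPT` satisfies the Bellman recursion. -/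
theorem statement_13 (T n m : ℕ) (hT : 1 ≤ T) [NeZero n] [NeZero m]
    (D : Type) [Fintype D] [Nonempty D]
    (Dcost : Fin (T + 1) → D → Fin n → Fin n → ℝ)
    (Dexp : Fin (T + 1) → D → Fin n → Fin m → ℝ)
    (Bcost : Fin (T + 1) → Fin m → Fin m → ℝ)
    (Bexp : Fin (T + 1) → Fin m → ℝ)
    (hDcost : ∀ t d h1 h2, h1 ≤ h2 → 0 ≤ Dcost t d h1 h2)
    (hDexp : ∀ t d h g, 0 ≤ Dexp t d h g)
    (hBcost : ∀ t g1 g2, g1 ≤ g2 → 0 ≤ Bcost t g1 g2)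
    (hBexp : ∀ t g, 0 ≤ Bexp t g)
    (t : Fin T) (g : Fin m) (η : D → Fin n) :
    OPT Dcost Dexp Bcost Bexp t.succ g η =
      sInf {c : EReal | ∃ (g' : Fin m) (η' : D → Fin n),
        g' ≤ g ∧ (∀ d, η' d ≤ η d) ∧
        c = OPT Dcost Dexp Bcost Bexp t.castSucc g' η' +
          ((Bcost t.succ g' g + Bexp t.succ g +
            ∑ d, (Dcost t.succ d (η' d) (η d) + Dexp t.succ d (η d) g) : ℝ) :
              EReal)} := by
  classical
  apply le_antisymm
  · refine le_sInf ?_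
    rintro c ⟨g', η', hg', hη', rfl⟩
    set k : ℝ := Bcost t.succ g' g + Bexp t.succ g +
      ∑ d, (Dcost t.succ d (η' d) (η d) + Dexp t.succ d (η d) g) with hk
    unfold OPT
    rw [sInf_add_real]
    refine le_sInf ?_
    rintro c ⟨c', ⟨hb, hd, hmono, hb0, hdp, hbt, hdt, rfl⟩, rfl⟩
    set hb' : Fin (T + 1) → Fin m := fun s => if s ≤ t.castSucc then hb s else g with hb'def
    set hd' : D → Fin (T + 1) → Fin n := fun d s => if s ≤ t.castSucc then hd d s else η d
      with hd'def
    have hnotle : ¬ (t.succ ≤ t.castSucc) := by simp [Fin.le_def]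
    have hBagree : ∀ s ≤ t.castSucc, hb s = hb' s := by
      intro s hs; simp [hb'def, hs]
    have hDagree : ∀ d, ∀ s ≤ t.castSucc, hd d s = hd' d s := by
      intro d s hs; simp [hd'def, hs]
    apply sInf_le
    refine ⟨hb', hd', ?_, ?_, ?_, ?_, ?_, ?_⟩
    · intro a b hab
      by_cases ha : a ≤ t.castSucc
      · by_cases hbb : b ≤ t.castSucc
        · simpa [hb'def, ha, hbb] using hmono hab
        · simp only [hb'def, if_pos ha, if_neg hbb]
          calc hb a ≤ hb t.castSucc := hmono ha
            _ = g' := hbt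
            _ ≤ g := hg'
      · have hbb : ¬ b ≤ t.castSucc := fun h => ha (hab.trans h)
        simp [hb'def, ha, hbb]
    · simpa [hb'def, Fin.zero_le] using hb0
    · intro d
      constructor
      · intro a b hab
        by_cases ha : a ≤ t.castSucc
        · by_cases hbb : b ≤ t.castSucc
          · simpa [hd'def, ha, hbb] using (hdp d).1 hab
          · simp only [hd'def, if_pos ha, if_neg hbb]
            calc hd d a ≤ hd d t.castSucc := (hdp d).1 ha
              _ = η' d := hdt d
              _ ≤ η d := hη' d
        · have hbb : ¬ b ≤ t.castSucc := fun h => ha (hab.trans h)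
          simp [hd'def, ha, hbb]
      · simpa [hd'def, Fin.zero_le] using (hdp d).2
    · simp [hb'def, hnotle]
    · intro d; simp [hd'def, hnotle]
    · show ((partialCost Dcost Dexp Bcost Bexp hd hb t.castSucc : ℝ) : EReal) + (k : EReal) =
        ((partialCost Dcost Dexp Bcost Bexp hd' hb' t.succ : ℝ) : EReal)
      rw [← EReal.coe_add]
      congr 1
      have hcost : partialCost Dcost Dexp Bcost Bexp hd' hb' t.succ =
          partialCost Dcost Dexp Bcost Bexp hd hb t.castSucc + k := by
        rw [partialCost_succ]
        rw [← partialCost_congr Dcost Dexp Bcost Bexp hd hd' hb hb' t.castSucc hBagree hDagree]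
        congr 1
        have e1 : hb' t.castSucc = g' := by
          rw [← hBagree t.castSucc le_rfl, hbt]
        have e2 : hb' t.succ = g := by simp [hb'def, hnotle]
        have e3 : ∀ d, hd' d t.castSucc = η' d := by
          intro d; rw [← hDagree d t.castSucc le_rfl, hdt]
        have e4 : ∀ d, hd' d t.succ = η d := by
          intro d; simp [hd'def, hnotle]
        rw [hk, e1, e2]
        congr 1
        refine Finset.sum_congr rfl fun d _ => ?_
        rw [e3, e4]
      rw [hcost]
  · refine le_sInf ?_
    rintro c ⟨hb, hd, hmono, hb0, hdp, hbt, hdt, rfl⟩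
    have hcs : t.castSucc ≤ t.succ := Fin.castSucc_lt_succ.le
    set g' := hb t.castSucc with hg'def
    set η' := fun d => hd d t.castSucc with hη'def
    set k : ℝ := Bcost t.succ g' g + Bexp t.succ g +
      ∑ d, (Dcost t.succ d (η' d) (η d) + Dexp t.succ d (η d) g) with hk
    have hgle : g' ≤ g := by rw [hg'def, ← hbt]; exact hmono hcs
    have hηle : ∀ d, η' d ≤ η d := by
      intro d; rw [hη'def, ← hdt d]; exact (hdp d).1 hcs
    have hcost : partialCost Dcost Dexp Bcost Bexp hd hb t.succ =
        partialCost Dcost Dexp Bcost Bexp hd hb t.castSucc + k := by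
      rw [partialCost_succ, hk, hbt]
      congr 2
      refine Finset.sum_congr rfl fun d _ => ?_
      rw [hdt d]
    calc sInf {c : EReal | ∃ (g' : Fin m) (η' : D → Fin n),
        g' ≤ g ∧ (∀ d, η' d ≤ η d) ∧
        c = OPT Dcost Dexp Bcost Bexp t.castSucc g' η' +
          ((Bcost t.succ g' g + Bexp t.succ g +
            ∑ d, (Dcost t.succ d (η' d) (η d) + Dexp t.succ d (η d) g) : ℝ) : EReal)}
        ≤ OPT Dcost Dexp Bcost Bexp t.castSucc g' η' + (k : EReal) :=
          sInf_le ⟨g', η', hgle, hηle, rfl⟩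
      _ ≤ ((partialCost Dcost Dexp Bcost Bexp hd hb t.castSucc : ℝ) : EReal) + (k : EReal) := by
          refine add_le_add_left (sInf_le ?_) _
          exact ⟨hb, hd, hmono, hb0, hdp, rfl, fun d => rfl, rfl⟩
      _ = ((partialCost Dcost Dexp Bcost Bexp hd hb t.succ : ℝ) : EReal) := by
          rw [← EReal.coe_add, hcost]
end
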